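/- If γ : Σ^⊥ × Σ^⊥ → ℝ is a metric, then the structure and depth preserving tree edit distance SdTed is a metric on the set of isomorphism classes of rooted labeled trees over Σ: it is nonnegative, SdTed(T, T') = 0 if and only if T and T' are isomorphic as rooted labeled trees, SdTed(T, T') = SdTed(T', T), and SdTed(T, T'') ≤ SdTed(T, T') + SdTed(T', T'') for all rooted labeled trees T, T', T''. -/

import Mathlib

open scoped Classical

/-- A rooted labeled tree with vertex set `V` and labels in `σ`, encoded by a
parent function: every vertex reaches the root by iterating `par`, and the
root is a fixed point of `par`. -/
structure LTree (V : Type) (σ : Type) where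
  root : V
  par : V → V
  label : V → σ
  par_root : par root = root
  acyc : ∀ w : V, ∃ k : ℕ, par^[k] w = root

namespace LTree

variable {V V' V'' : Type} {σ : Type}

/-- The depth of a vertex: its distance to the root. -/
noncomputable def depth (T : LTree V σ) (w : V) : ℕ := Nat.find (T.acyc w)

/-- `T.Desc v w` means `w` is a descendant of `v` (or `w = v`), i.e. `w` belongs
to the subtree `T[v]` rooted at `v`. -/
def Desc (T : LTree V σ) (v w : V) : Prop := ∃ k : ℕ, T.par^[k] w = v

/-- A structure and depth preserving mapping (SdM) between rooted labeled trees. -/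
def IsSdM (T : LTree V σ) (T' : LTree V' σ) (M : Finset (V × V')) : Prop :=
  (∀ p ∈ M, ∀ q ∈ M, (p.1 = q.1 ↔ p.2 = q.2)) ∧
  (T.root, T'.root) ∈ M ∧
  (∀ p ∈ M, p.1 ≠ T.root → (T.par p.1, T'.par p.2) ∈ M)

/-- An isomorphism of rooted labeled trees: a bijection of the vertex sets
preserving the root, the parent relation (hence all edges), and all labels. -/
structure Iso (T : LTree V σ) (T' : LTree V' σ) where
  e : V ≃ V'
  root_eq : e T.root = T'.root
  par_eq : ∀ w, e (T.par w) = T'.par (e w)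
  label_eq : ∀ w, T'.label (e w) = T.label w

/-- `γ` is a metric on `Σ ∪ {⊥}` (where `⊥` is encoded by `none`). -/
def IsMetricCost (γ : Option σ → Option σ → ℝ) : Prop :=
  (∀ a b, γ a b = 0 ↔ a = b) ∧ (∀ a b, γ a b = γ b a) ∧
  (∀ a b c, γ a c ≤ γ a b + γ b c)

/-- The cost `γ(M)` of a mapping `M`: relabeling costs for matched pairs plus
deletion costs for unmatched vertices of `T` plus insertion costs for
unmatched vertices of `T'`. -/
noncomputable def cost [Fintype V] [Fintype V'] (γ : Option σ → Option σ → ℝ)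
    (T : LTree V σ) (T' : LTree V' σ) (M : Finset (V × V')) : ℝ :=
  (∑ p ∈ M, γ (some (T.label p.1)) (some (T'.label p.2)))
  + (∑ w ∈ Finset.univ.filter (fun w : V => ∀ p ∈ M, p.1 ≠ w),
      γ (some (T.label w)) none)
  + (∑ w' ∈ Finset.univ.filter (fun w' : V' => ∀ p ∈ M, p.2 ≠ w'),
      γ none (some (T'.label w')))

/-- The structure and depth preserving tree edit distance: the minimum cost
of a structure and depth preserving mapping between `T` and `T'`. -/
noncomputable def SdTed [Fintype V] [Fintype V'] (γ : Option σ → Option σ → ℝ)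
    (T : LTree V σ) (T' : LTree V' σ) : ℝ :=
  sInf {c : ℝ | ∃ M : Finset (V × V'), IsSdM T T' M ∧ cost γ T T' M = c}

theorem Desc.par {T : LTree V σ} {v w : V} (h : T.Desc v w) (hw : w ≠ v) :
    T.Desc v (T.par w) := by
  obtain ⟨k, hk⟩ := h
  cases k with
  | zero => exact absurd hk hw
  | succ k => exact ⟨k, by rwa [Function.iterate_succ_apply] at hk⟩

/-- The parent function of the subtree `T[v]`. -/
noncomputable def subPar (T : LTree V σ) (v : V) (w : {w : V // T.Desc v w}) :
    {w : V // T.Desc v w} :=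
  if h : (w : V) = v then ⟨v, 0, rfl⟩ else ⟨T.par w, w.2.par h⟩

/-- The subtree `T[v]` of `T` rooted at `v`, induced by `v` and all its
descendants. -/
noncomputable def sub (T : LTree V σ) (v : V) : LTree {w : V // T.Desc v w} σ where
  root := ⟨v, 0, rfl⟩
  par := subPar T v
  label := fun w => T.label w
  par_root := dif_pos rfl
  acyc := by
    have key : ∀ (k : ℕ) (w : {w : V // T.Desc v w}), T.par^[k] (w : V) = v →
        (subPar T v)^[k] w = ⟨v, 0, rfl⟩ := by
      intro k
      induction k with
      | zero => intro w hw; exact Subtype.ext hw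
      | succ k ih =>
        intro w hw
        by_cases hv : (w : V) = v
        · rw [Function.iterate_succ_apply]
          have : subPar T v w = ⟨v, 0, rfl⟩ := dif_pos hv
          rw [this]
          have hfix : subPar T v ⟨v, 0, rfl⟩ = ⟨v, 0, rfl⟩ := dif_pos rfl
          exact Function.iterate_fixed hfix k
        · rw [Function.iterate_succ_apply]
          have : subPar T v w = ⟨T.par w, w.2.par hv⟩ := dif_neg hv
          rw [this]
          exact ih _ (by rwa [Function.iterate_succ_apply] at hw)
    intro w
    obtain ⟨k, hk⟩ := w.2
    exact ⟨k, key k w hk⟩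

end LTree

open LTree

section MetricAux

variable {V V' V'' : Type} {σ : Type}

lemma gamma_nonneg {γ : Option σ → Option σ → ℝ} (hγ : IsMetricCost γ)
    (a b : Option σ) : 0 ≤ γ a b := by
  have h0 : γ a a = 0 := (hγ.1 a a).2 rfl
  have ht := hγ.2.2 a b a
  rw [h0, hγ.2.1 b a] at ht
  linarith

lemma cost_nonneg [Fintype V] [Fintype V'] {γ : Option σ → Option σ → ℝ}
    (hγ : IsMetricCost γ) (T : LTree V σ) (T' : LTree V' σ)
    (M : Finset (V × V')) : 0 ≤ cost γ T T' M := by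
  refine add_nonneg (add_nonneg ?_ ?_) ?_ <;>
    exact Finset.sum_nonneg fun _ _ => gamma_nonneg hγ _ _

lemma isSdM_singleton (T : LTree V σ) (T' : LTree V' σ) :
    IsSdM T T' {(T.root, T'.root)} := by
  refine ⟨?_, Finset.mem_singleton_self _, ?_⟩
  · intro p hp q hq
    rw [Finset.mem_singleton] at hp hq
    subst hp; subst hq; simp
  · intro p hp hne
    rw [Finset.mem_singleton] at hp
    exact absurd (by rw [hp]) hne

lemma costSet_finite [Fintype V] [Fintype V'] (γ : Option σ → Option σ → ℝ)
    (T : LTree V σ) (T' : LTree V' σ) :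
    {c : ℝ | ∃ M : Finset (V × V'), IsSdM T T' M ∧ cost γ T T' M = c}.Finite := by
  have h : {c : ℝ | ∃ M : Finset (V × V'), IsSdM T T' M ∧ cost γ T T' M = c}
      ⊆ (fun M => cost γ T T' M) '' Set.univ := by
    rintro c ⟨M, _, rfl⟩; exact ⟨M, trivial, rfl⟩
  exact Set.Finite.subset (Set.finite_univ.image _) h

lemma costSet_nonempty [Fintype V] [Fintype V'] (γ : Option σ → Option σ → ℝ)
    (T : LTree V σ) (T' : LTree V' σ) :
    {c : ℝ | ∃ M : Finset (V × V'), IsSdM T T' M ∧ cost γ T T' M = c}.Nonempty :=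
  ⟨_, {(T.root, T'.root)}, isSdM_singleton T T', rfl⟩

lemma sdted_le_cost [Fintype V] [Fintype V'] {γ : Option σ → Option σ → ℝ}
    {T : LTree V σ} {T' : LTree V' σ} {M : Finset (V × V')}
    (h : IsSdM T T' M) : SdTed γ T T' ≤ cost γ T T' M :=
  csInf_le (costSet_finite γ T T').bddBelow ⟨M, h, rfl⟩

lemma exists_sdted_eq [Fintype V] [Fintype V'] (γ : Option σ → Option σ → ℝ)
    (T : LTree V σ) (T' : LTree V' σ) :
    ∃ M : Finset (V × V'), IsSdM T T' M ∧ SdTed γ T T' = cost γ T T' M := by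
  obtain ⟨M, hM, hc⟩ := (costSet_nonempty γ T T').csInf_mem (costSet_finite γ T T')
  exact ⟨M, hM, hc.symm⟩

lemma sdted_nonneg [Fintype V] [Fintype V'] {γ : Option σ → Option σ → ℝ}
    (hγ : IsMetricCost γ) (T : LTree V σ) (T' : LTree V' σ) :
    0 ≤ SdTed γ T T' :=
  le_csInf (costSet_nonempty γ T T') (by rintro c ⟨M, _, rfl⟩; exact cost_nonneg hγ T T' M)

/-- The partial matching function of a mapping. -/
noncomputable def fnM (M : Finset (V × V')) (v : V) : Option V' :=
  if h : ∃ v', (v, v') ∈ M then some h.choose else none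

lemma fnM_spec {M : Finset (V × V')} {v : V} {v' : V'}
    (h : fnM M v = some v') : (v, v') ∈ M := by
  unfold fnM at h
  split_ifs at h with hh
  obtain rfl : hh.choose = v' := by injection h
  exact hh.choose_spec

lemma fnM_eq_some {M : Finset (V × V')}
    (hdef : ∀ p ∈ M, ∀ q ∈ M, (p.1 = q.1 ↔ p.2 = q.2))
    {v : V} {v' : V'} (h : (v, v') ∈ M) : fnM M v = some v' := by
  have hh : ∃ w', (v, w') ∈ M := ⟨v', h⟩
  rw [fnM, dif_pos hh]
  exact congrArg some ((hdef _ hh.choose_spec _ h).1 rfl)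

lemma fnM_eq_none {M : Finset (V × V')} {v : V}
    (h : ∀ v', (v, v') ∉ M) : fnM M v = none :=
  dif_neg (fun ⟨v', hv'⟩ => h v' hv')

lemma cost_eq_fn [Fintype V] [Fintype V'] (γ : Option σ → Option σ → ℝ)
    (T : LTree V σ) (T' : LTree V' σ) {M : Finset (V × V')}
    (hdef : ∀ p ∈ M, ∀ q ∈ M, (p.1 = q.1 ↔ p.2 = q.2)) :
    cost γ T T' M
      = (∑ v : V, γ (some (T.label v)) (Option.map T'.label (fnM M v)))
        + ∑ w' ∈ Finset.univ.filter (fun w' : V' => ∀ p ∈ M, p.2 ≠ w'),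
            γ none (some (T'.label w')) := by
  unfold cost
  congr 1
  rw [← Finset.sum_filter_add_sum_filter_not Finset.univ
      (fun v : V => ∀ p ∈ M, p.1 ≠ v)
      (fun v => γ (some (T.label v)) (Option.map T'.label (fnM M v)))]
  have h1 : ∑ w ∈ Finset.univ.filter (fun w : V => ∀ p ∈ M, p.1 ≠ w),
      γ (some (T.label w)) none
      = ∑ v ∈ Finset.univ.filter (fun v : V => ∀ p ∈ M, p.1 ≠ v),
          γ (some (T.label v)) (Option.map T'.label (fnM M v)) := by
    refine Finset.sum_congr rfl fun v hv => ?_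
    rw [Finset.mem_filter] at hv
    rw [fnM_eq_none (fun v' hv' => hv.2 _ hv' rfl)]
    rfl
  have h2 : ∑ p ∈ M, γ (some (T.label p.1)) (some (T'.label p.2))
      = ∑ v ∈ Finset.univ.filter (fun v : V => ¬ ∀ p ∈ M, p.1 ≠ v),
          γ (some (T.label v)) (Option.map T'.label (fnM M v)) := by
    refine Finset.sum_bij (fun p _ => p.1) ?_ ?_ ?_ ?_
    · intro p hp
      simp only [Finset.mem_filter, Finset.mem_univ, true_and]
      push_neg
      exact ⟨p, hp, rfl⟩
    · intro p hp q hq h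
      exact Prod.ext h ((hdef p hp q hq).1 h)
    · intro v hv
      simp only [Finset.mem_filter, Finset.mem_univ, true_and] at hv
      push_neg at hv
      obtain ⟨p, hp, hpv⟩ := hv
      exact ⟨p, hp, hpv⟩
    · intro p hp
      rw [fnM_eq_some hdef (show (p.1, p.2) ∈ M by simpa using hp)]
      rfl
  rw [h1, h2]
  ring

end MetricAux

section MetricAux2

variable {V V' V'' : Type} {σ : Type}

lemma exists_cost_zero_of_iso [Fintype V] [Fintype V']
    {γ : Option σ → Option σ → ℝ} (hγ : IsMetricCost γ)
    {T : LTree V σ} {T' : LTree V' σ} (φ : Iso T T') :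
    ∃ M : Finset (V × V'), IsSdM T T' M ∧ cost γ T T' M = 0 := by
  set M : Finset (V × V') := Finset.univ.image (fun v => (v, φ.e v)) with hMdef
  have hmem : ∀ p : V × V', p ∈ M ↔ p.2 = φ.e p.1 := by
    intro p
    simp only [hMdef, Finset.mem_image, Finset.mem_univ, true_and]
    constructor
    · rintro ⟨v, rfl⟩; rfl
    · intro h
      exact ⟨p.1, by rw [← h]⟩
  refine ⟨M, ⟨?_, ?_, ?_⟩, ?_⟩
  · intro p hp q hq
    rw [hmem] at hp hq
    rw [hp, hq]
    exact ⟨fun h => by rw [h], fun h => φ.e.injective h⟩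
  · rw [hmem]; exact φ.root_eq.symm
  · intro p hp hne
    rw [hmem] at hp ⊢
    rw [hp, ← φ.par_eq]
  · unfold cost
    have h1 : ∑ p ∈ M, γ (some (T.label p.1)) (some (T'.label p.2)) = 0 := by
      refine Finset.sum_eq_zero fun p hp => ?_
      rw [hmem] at hp
      rw [hp, φ.label_eq]
      exact (hγ.1 _ _).2 rfl
    have h2 : ∑ w ∈ Finset.univ.filter (fun w : V => ∀ p ∈ M, p.1 ≠ w),
        γ (some (T.label w)) none = 0 := by
      refine Finset.sum_eq_zero fun w hw => ?_
      rw [Finset.mem_filter] at hw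
      exact absurd rfl (hw.2 (w, φ.e w) ((hmem _).2 rfl))
    have h3 : ∑ w' ∈ Finset.univ.filter (fun w' : V' => ∀ p ∈ M, p.2 ≠ w'),
        γ none (some (T'.label w')) = 0 := by
      refine Finset.sum_eq_zero fun w' hw' => ?_
      rw [Finset.mem_filter] at hw'
      exact absurd rfl (hw'.2 (φ.e.symm w', w') ((hmem _).2 (φ.e.apply_symm_apply w').symm))
    rw [h1, h2, h3]; ring

lemma iso_of_cost_zero [Fintype V] [Fintype V']
    {γ : Option σ → Option σ → ℝ} (hγ : IsMetricCost γ)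
    {T : LTree V σ} {T' : LTree V' σ} {M : Finset (V × V')}
    (hM : IsSdM T T' M) (hc : cost γ T T' M = 0) : Nonempty (Iso T T') := by
  obtain ⟨hdef, hroot, hpar⟩ := hM
  unfold cost at hc
  have n1 : 0 ≤ ∑ p ∈ M, γ (some (T.label p.1)) (some (T'.label p.2)) :=
    Finset.sum_nonneg fun _ _ => gamma_nonneg hγ _ _
  have n2 : 0 ≤ ∑ w ∈ Finset.univ.filter (fun w : V => ∀ p ∈ M, p.1 ≠ w),
      γ (some (T.label w)) none :=
    Finset.sum_nonneg fun _ _ => gamma_nonneg hγ _ _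
  have n3 : 0 ≤ ∑ w' ∈ Finset.univ.filter (fun w' : V' => ∀ p ∈ M, p.2 ≠ w'),
      γ none (some (T'.label w')) :=
    Finset.sum_nonneg fun _ _ => gamma_nonneg hγ _ _
  have h1 : ∀ p ∈ M, γ (some (T.label p.1)) (some (T'.label p.2)) = 0 :=
    (Finset.sum_eq_zero_iff_of_nonneg (fun _ _ => gamma_nonneg hγ _ _)).1 (by linarith)
  have h2 : ∀ w ∈ Finset.univ.filter (fun w : V => ∀ p ∈ M, p.1 ≠ w),
      γ (some (T.label w)) none = 0 :=
    (Finset.sum_eq_zero_iff_of_nonneg (fun _ _ => gamma_nonneg hγ _ _)).1 (by linarith)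
  have h3 : ∀ w' ∈ Finset.univ.filter (fun w' : V' => ∀ p ∈ M, p.2 ≠ w'),
      γ none (some (T'.label w')) = 0 :=
    (Finset.sum_eq_zero_iff_of_nonneg (fun _ _ => gamma_nonneg hγ _ _)).1 (by linarith)
  have hTot : ∀ v : V, ∃ v', (v, v') ∈ M := by
    intro v
    by_contra h
    push_neg at h
    have hv : v ∈ Finset.univ.filter (fun w : V => ∀ p ∈ M, p.1 ≠ w) := by
      refine Finset.mem_filter.2 ⟨Finset.mem_univ v, fun p hp he => ?_⟩
      have hpm : (p.1, p.2) ∈ M := by simpa using hp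
      rw [he] at hpm
      exact h p.2 hpm
    have := (hγ.1 _ _).1 (h2 v hv)
    exact Option.some_ne_none _ this
  have hTot' : ∀ v' : V', ∃ v : V, (v, v') ∈ M := by
    intro v'
    by_contra h
    push_neg at h
    have hv : v' ∈ Finset.univ.filter (fun w' : V' => ∀ p ∈ M, p.2 ≠ w') := by
      refine Finset.mem_filter.2 ⟨Finset.mem_univ v', fun p hp he => ?_⟩
      have hpm : (p.1, p.2) ∈ M := by simpa using hp
      rw [he] at hpm
      exact h p.1 hpm
    have := (hγ.1 _ _).1 (h3 v' hv)
    exact Option.some_ne_none _ this.symm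
  set f : V → V' := fun v => (hTot v).choose with hf
  have hfM : ∀ v, (v, f v) ∈ M := fun v => (hTot v).choose_spec
  have hfuniq : ∀ {v v'}, (v, v') ∈ M → f v = v' := by
    intro v v' h
    exact (hdef _ (hfM v) _ h).1 rfl
  have hbij : Function.Bijective f := by
    constructor
    · intro v₁ v₂ h
      exact (hdef _ (hfM v₁) _ (hfM v₂)).2 (by rw [h])
    · intro v'
      obtain ⟨v, hv⟩ := hTot' v'
      exact ⟨v, hfuniq hv⟩
  refine ⟨⟨Equiv.ofBijective f hbij, ?_, ?_, ?_⟩⟩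
  · exact hfuniq hroot
  · intro w
    show f (T.par w) = T'.par (f w)
    by_cases hw : w = T.root
    · subst hw
      rw [T.par_root, hfuniq hroot, T'.par_root]
    · exact hfuniq (hpar (w, f w) (hfM w) hw)
  · intro w
    show T'.label (f w) = T.label w
    have := (hγ.1 _ _).1 (h1 (w, f w) (hfM w))
    exact (Option.some.inj this).symm

lemma mem_swap_image {M : Finset (V × V')} {q : V' × V} :
    q ∈ M.image Prod.swap ↔ (q.2, q.1) ∈ M := by
  simp only [Finset.mem_image]
  constructor
  · rintro ⟨p, hp, rfl⟩; simpa using hp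
  · intro h; exact ⟨(q.2, q.1), h, rfl⟩

lemma isSdM_swap {T : LTree V σ} {T' : LTree V' σ} {M : Finset (V × V')}
    (h : IsSdM T T' M) : IsSdM T' T (M.image Prod.swap) := by
  obtain ⟨hdef, hroot, hpar⟩ := h
  refine ⟨?_, ?_, ?_⟩
  · intro p hp q hq
    rw [mem_swap_image] at hp hq
    exact (hdef _ hp _ hq).symm
  · rw [mem_swap_image]; exact hroot
  · intro p hp hne
    rw [mem_swap_image] at hp
    rw [mem_swap_image]
    refine hpar (p.2, p.1) hp (fun he => ?_)
    exact hne ((hdef _ hp _ hroot).1 he)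

lemma cost_swap [Fintype V] [Fintype V'] {γ : Option σ → Option σ → ℝ}
    (hγ : IsMetricCost γ) (T : LTree V σ) (T' : LTree V' σ)
    (M : Finset (V × V')) :
    cost γ T' T (M.image Prod.swap) = cost γ T T' M := by
  unfold cost
  have h1 : ∑ p ∈ M.image Prod.swap, γ (some (T'.label p.1)) (some (T.label p.2))
      = ∑ p ∈ M, γ (some (T.label p.1)) (some (T'.label p.2)) := by
    rw [Finset.sum_image (fun x _ y _ h => Prod.swap_injective h)]
    exact Finset.sum_congr rfl fun p _ => hγ.2.1 _ _
  have h2 : ∑ w ∈ Finset.univ.filter (fun w : V' => ∀ p ∈ M.image Prod.swap, p.1 ≠ w),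
      γ (some (T'.label w)) none
      = ∑ w' ∈ Finset.univ.filter (fun w' : V' => ∀ p ∈ M, p.2 ≠ w'),
          γ none (some (T'.label w')) := by
    rw [show Finset.univ.filter (fun w : V' => ∀ p ∈ M.image Prod.swap, p.1 ≠ w)
        = Finset.univ.filter (fun w' : V' => ∀ p ∈ M, p.2 ≠ w') from ?_]
    · exact Finset.sum_congr rfl fun w _ => hγ.2.1 _ _
    · apply Finset.filter_congr
      intro w _
      constructor
      · intro h p hp
        exact h (p.2, p.1) (mem_swap_image.2 (by exact hp))
      · intro h p hp
        exact h (p.2, p.1) (mem_swap_image.1 hp)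
  have h3 : ∑ w' ∈ Finset.univ.filter (fun w' : V => ∀ p ∈ M.image Prod.swap, p.2 ≠ w'),
      γ none (some (T.label w'))
      = ∑ w ∈ Finset.univ.filter (fun w : V => ∀ p ∈ M, p.1 ≠ w),
          γ (some (T.label w)) none := by
    rw [show Finset.univ.filter (fun w' : V => ∀ p ∈ M.image Prod.swap, p.2 ≠ w')
        = Finset.univ.filter (fun w : V => ∀ p ∈ M, p.1 ≠ w) from ?_]
    · exact Finset.sum_congr rfl fun w _ => hγ.2.1 _ _
    · apply Finset.filter_congr
      intro w _
      constructor
      · intro h p hp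
        exact h (p.2, p.1) (mem_swap_image.2 (by exact hp))
      · intro h p hp
        exact h (p.2, p.1) (mem_swap_image.1 hp)
  rw [h1, h2, h3]
  ring

end MetricAux2

section MetricAux3

variable {V V' V'' : Type} {σ : Type}

lemma cost_comp_le [Fintype V] [Fintype V'] [Fintype V'']
    {γ : Option σ → Option σ → ℝ} (hγ : IsMetricCost γ)
    {T : LTree V σ} {T' : LTree V' σ} {T'' : LTree V'' σ}
    {M : Finset (V × V')} {M' : Finset (V' × V'')}
    (hM : IsSdM T T' M) (hM' : IsSdM T' T'' M') :
    ∃ M'' : Finset (V × V''), IsSdM T T'' M'' ∧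
      cost γ T T'' M'' ≤ cost γ T T' M + cost γ T' T'' M' := by
  obtain ⟨hdef, hroot, hpar⟩ := hM
  obtain ⟨hdef', hroot', hpar'⟩ := hM'
  set M'' : Finset (V × V'') :=
    Finset.univ.filter (fun q : V × V'' => ∃ v', (q.1, v') ∈ M ∧ (v', q.2) ∈ M')
    with hM''def
  have hmem : ∀ q : V × V'', q ∈ M'' ↔ ∃ v', (q.1, v') ∈ M ∧ (v', q.2) ∈ M' := by
    intro q; simp [hM''def]
  have hdef'' : ∀ p ∈ M'', ∀ q ∈ M'', (p.1 = q.1 ↔ p.2 = q.2) := by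
    intro p hp q hq
    obtain ⟨a, ha1, ha2⟩ := (hmem p).1 hp
    obtain ⟨b, hb1, hb2⟩ := (hmem q).1 hq
    constructor
    · intro h
      exact (hdef' _ ha2 _ hb2).1 ((hdef _ ha1 _ hb1).1 h)
    · intro h
      exact (hdef _ ha1 _ hb1).2 ((hdef' _ ha2 _ hb2).2 h)
  have hsdm'' : IsSdM T T'' M'' := by
    refine ⟨hdef'', ?_, ?_⟩
    · exact (hmem _).2 ⟨T'.root, hroot, hroot'⟩
    · intro p hp hne
      obtain ⟨v', h1, h2⟩ := (hmem p).1 hp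
      have hv'ne : v' ≠ T'.root := by
        intro he
        subst he
        exact hne ((hdef _ h1 _ hroot).2 rfl)
      exact (hmem _).2 ⟨T'.par v', hpar _ h1 hne, hpar' _ h2 hv'ne⟩
  refine ⟨M'', hsdm'', ?_⟩
  -- functional forms
  have hfn : ∀ v : V, fnM M'' v = (fnM M v).bind (fnM M') := by
    intro v
    cases hf : fnM M v with
    | none =>
      rw [Option.bind_none]
      apply fnM_eq_none
      intro v'' hmem''
      obtain ⟨v', h1, h2⟩ := (hmem _).1 hmem''
      rw [fnM_eq_some hdef h1] at hf
      cases hf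
    | some v' =>
      rw [Option.bind_some]
      cases hg : fnM M' v' with
      | none =>
        apply fnM_eq_none
        intro v'' hmem''
        obtain ⟨w', h1, h2⟩ := (hmem _).1 hmem''
        have : w' = v' := by
          have := fnM_eq_some hdef h1
          rw [hf] at this
          exact (Option.some.inj this).symm
        subst this
        rw [fnM_eq_some hdef' h2] at hg
        cases hg
      | some v'' =>
        exact fnM_eq_some hdef'' ((hmem _).2 ⟨v', fnM_spec hf, fnM_spec hg⟩)
  set g : V' → ℝ :=
    fun v' => γ (some (T'.label v')) (Option.map T''.label (fnM M' v')) with hgdef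
  set b : V' → ℝ := fun v' => γ none (some (T'.label v')) + g v' with hbdef
  have hgnn : ∀ v', 0 ≤ g v' := fun v' => gamma_nonneg hγ _ _
  have hbnn : ∀ v', 0 ≤ b v' := fun v' => add_nonneg (gamma_nonneg hγ _ _) (hgnn v')
  -- Step 1: main sum bound
  have step1 : ∑ v : V, γ (some (T.label v)) (Option.map T''.label (fnM M'' v))
      ≤ (∑ v : V, γ (some (T.label v)) (Option.map T'.label (fnM M v)))
        + ∑ v : V, ((fnM M v).map g).getD 0 := by
    rw [← Finset.sum_add_distrib]
    refine Finset.sum_le_sum fun v _ => ?_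
    rw [hfn v]
    cases hf : fnM M v with
    | none => simp
    | some v' =>
      simp only [Option.bind_some, Option.map_some, Option.getD_some]
      exact hγ.2.2 _ (some (T'.label v')) _
  -- Step 2: reindex the getD sum
  have step2 : ∑ v : V, ((fnM M v).map g).getD 0
      = ∑ v' ∈ Finset.univ.filter (fun v' : V' => ¬ ∀ p ∈ M, p.2 ≠ v'), g v' := by
    have h0 : ∑ v : V, ((fnM M v).map g).getD 0
        = ∑ v ∈ Finset.univ.filter (fun v : V => (fnM M v).isSome), ((fnM M v).map g).getD 0 := by
      refine (Finset.sum_subset (Finset.filter_subset _ _) ?_).symm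
      intro v _ hv
      simp only [Finset.mem_filter, Finset.mem_univ, true_and] at hv
      rw [Option.not_isSome_iff_eq_none] at hv
      rw [hv]
      rfl
    rw [h0]
    refine Finset.sum_bij
      (fun v hv => (fnM M v).get (by
        simpa using (Finset.mem_filter.1 hv).2)) ?_ ?_ ?_ ?_
    · intro v hv
      have hs : (fnM M v).isSome := by simpa using (Finset.mem_filter.1 hv).2
      simp only [Finset.mem_filter, Finset.mem_univ, true_and]
      push_neg
      exact ⟨(v, (fnM M v).get hs), fnM_spec (Option.some_get hs).symm, rfl⟩
    · intro v₁ hv₁ v₂ hv₂ h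
      have hs₁ : (fnM M v₁).isSome := by simpa using (Finset.mem_filter.1 hv₁).2
      have hs₂ : (fnM M v₂).isSome := by simpa using (Finset.mem_filter.1 hv₂).2
      have h1 : (v₁, (fnM M v₁).get hs₁) ∈ M := fnM_spec (Option.some_get hs₁).symm
      have h2 : (v₂, (fnM M v₂).get hs₂) ∈ M := fnM_spec (Option.some_get hs₂).symm
      have h' : (fnM M v₁).get hs₁ = (fnM M v₂).get hs₂ := h
      rw [h'] at h1
      exact (hdef _ h1 _ h2).2 rfl
    · intro v' hv'
      simp only [Finset.mem_filter, Finset.mem_univ, true_and] at hv'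
      push_neg at hv'
      obtain ⟨p, hp, hp2⟩ := hv'
      have hps : fnM M p.1 = some v' := fnM_eq_some hdef (by rw [← hp2]; exact (by exact hp))
      refine ⟨p.1, ?_, ?_⟩
      · exact Finset.mem_filter.2 ⟨Finset.mem_univ _, by rw [hps]; rfl⟩
      · simp [hps]
    · intro v hv
      have hs : (fnM M v).isSome := by simpa using (Finset.mem_filter.1 hv).2
      obtain ⟨v', hv'⟩ := Option.isSome_iff_exists.1 hs
      simp [hv']
  -- Step 3: split the V' sum
  have step3 : (∑ v' ∈ Finset.univ.filter (fun v' : V' => ∀ p ∈ M, p.2 ≠ v'), g v')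
      + ∑ v' ∈ Finset.univ.filter (fun v' : V' => ¬ ∀ p ∈ M, p.2 ≠ v'), g v'
      = ∑ v' : V', g v' :=
    Finset.sum_filter_add_sum_filter_not Finset.univ _ _
  -- Step 4: bound the unmatched-V'' sum
  set U' : Finset V' := Finset.univ.filter (fun v' : V' => ∀ p ∈ M, p.2 ≠ v') with hU'def
  set U'' : Finset V'' := Finset.univ.filter (fun v'' : V'' => ∀ p ∈ M', p.2 ≠ v'') with hU''def
  set W : Finset V'' := Finset.univ.filter (fun v'' : V'' => ∀ q ∈ M'', q.2 ≠ v'') with hWdef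
  have step4 : ∑ v'' ∈ W, γ none (some (T''.label v''))
      ≤ (∑ v'' ∈ U'', γ none (some (T''.label v''))) + ∑ v' ∈ U', b v' := by
    rw [← Finset.sum_filter_add_sum_filter_not W (fun v'' : V'' => ∀ p ∈ M', p.2 ≠ v'')]
    have hW1 : ∑ v'' ∈ W.filter (fun v'' : V'' => ∀ p ∈ M', p.2 ≠ v''),
        γ none (some (T''.label v''))
        ≤ ∑ v'' ∈ U'', γ none (some (T''.label v'')) := by
      refine Finset.sum_le_sum_of_subset_of_nonneg ?_ (fun _ _ _ => gamma_nonneg hγ _ _)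
      intro v'' hv''
      rw [Finset.mem_filter] at hv''
      exact Finset.mem_filter.2 ⟨Finset.mem_univ _, hv''.2⟩
    have hW2 : ∑ v'' ∈ W.filter (fun v'' : V'' => ¬ ∀ p ∈ M', p.2 ≠ v''),
        γ none (some (T''.label v'')) ≤ ∑ v' ∈ U', b v' := by
      set W2 := W.filter (fun v'' : V'' => ¬ ∀ p ∈ M', p.2 ≠ v'') with hW2def
      have hex : ∀ v'' ∈ W2, ∃ v', (v', v'') ∈ M' := by
        intro v'' hv''
        rw [hW2def, Finset.mem_filter] at hv''
        have := hv''.2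
        push_neg at this
        obtain ⟨p, hp, hp2⟩ := this
        exact ⟨p.1, by rw [← hp2]; exact (by simpa using hp)⟩
      set φ : V'' → V' := fun v'' =>
        if h : ∃ v', (v', v'') ∈ M' then h.choose else T'.root with hφdef
      have hφM : ∀ v'' ∈ W2, (φ v'', v'') ∈ M' := by
        intro v'' hv''
        have h := hex v'' hv''
        rw [hφdef]
        simp only [dif_pos h]
        exact h.choose_spec
      have hstep : ∑ v'' ∈ W2, γ none (some (T''.label v''))
          ≤ ∑ v'' ∈ W2, b (φ v'') := by
        refine Finset.sum_le_sum fun v'' hv'' => ?_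
        have hm := hφM v'' hv''
        have hgv : g (φ v'') = γ (some (T'.label (φ v''))) (some (T''.label v'')) := by
          rw [hgdef]
          simp only [fnM_eq_some hdef' hm, Option.map_some]
        rw [hbdef]
        simp only
        rw [hgv]
        exact hγ.2.2 _ (some (T'.label (φ v''))) _
      refine hstep.trans ?_
      rw [← Finset.sum_image (f := b) (g := φ) (s := W2) ?_]
      · refine Finset.sum_le_sum_of_subset_of_nonneg ?_ (fun v' _ _ => hbnn v')
        intro v' hv'
        rw [Finset.mem_image] at hv'
        obtain ⟨v'', hv'', rfl⟩ := hv'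
        refine Finset.mem_filter.2 ⟨Finset.mem_univ _, fun p hp hp2 => ?_⟩
        -- if (p.1, φ v'') ∈ M then (p.1, v'') ∈ M'' contradicting v'' ∈ W
        have hpm : (p.1, φ v'') ∈ M := by
          rw [← hp2]; exact (by simpa using hp)
        have : (p.1, v'') ∈ M'' := (hmem _).2 ⟨φ v'', hpm, hφM v'' hv''⟩
        rw [hW2def, Finset.mem_filter, hWdef, Finset.mem_filter] at hv''
        exact hv''.1.2 _ this rfl
      · intro x hx y hy hxy
        have h1 := hφM x hx
        have h2 := hφM y hy
        rw [hxy] at h1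
        exact (hdef' _ h1 _ h2).1 rfl
    exact add_le_add hW1 hW2
  -- assemble
  rw [cost_eq_fn γ T T'' hdef'', cost_eq_fn γ T T' hdef, cost_eq_fn γ T' T'' hdef']
  have hbsum : ∑ v' ∈ U', b v'
      = (∑ v' ∈ U', γ none (some (T'.label v'))) + ∑ v' ∈ U', g v' := by
    simp only [hbdef]
    exact Finset.sum_add_distrib
  rw [hbsum] at step4
  simp only [hgdef] at step1 step2 step3 step4
  simp only [hU'def, hU''def, hWdef] at step3 step4
  linarith [step1, step2, step3, step4]

end MetricAux3

/-- If `γ` is a metric on `Σ ∪ {⊥}`, then the structure and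
depth preserving tree edit distance `SdTed` is a metric on the set of
isomorphism classes of rooted labeled trees over `Σ`: it is nonnegative,
it vanishes exactly on isomorphic pairs, it is symmetric, and it satisfies
the triangle inequality. -/
theorem sdted_is_metric {σ : Type} (γ : Option σ → Option σ → ℝ)
    (hγ : IsMetricCost γ) :
    (∀ (V : Type) [Fintype V] (V' : Type) [Fintype V']
        (T : LTree V σ) (T' : LTree V' σ),
      0 ≤ SdTed γ T T' ∧
      (SdTed γ T T' = 0 ↔ Nonempty (Iso T T')) ∧
      SdTed γ T T' = SdTed γ T' T) ∧
    (∀ (V : Type) [Fintype V] (V' : Type) [Fintype V'] (V'' : Type) [Fintype V'']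
        (T : LTree V σ) (T' : LTree V' σ) (T'' : LTree V'' σ),
      SdTed γ T T'' ≤ SdTed γ T T' + SdTed γ T' T'') := by
  constructor
  · intro V _ V' _ T T'
    refine ⟨sdted_nonneg hγ T T', ⟨?_, ?_⟩, ?_⟩
    · intro h0
      obtain ⟨M, hM, hc⟩ := exists_sdted_eq γ T T'
      exact iso_of_cost_zero hγ hM (by rw [← hc, h0])
    · rintro ⟨φ⟩
      obtain ⟨M, hM, hc⟩ := exists_cost_zero_of_iso hγ φ
      have h1 := sdted_le_cost (γ := γ) hM
      have h2 := sdted_nonneg hγ T T'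
      rw [hc] at h1
      linarith
    · have key : ∀ (A : Type) [Fintype A] (B : Type) [Fintype B]
          (S : LTree A σ) (S' : LTree B σ), SdTed γ S' S ≤ SdTed γ S S' := by
        intro A _ B _ S S'
        obtain ⟨M, hM, hc⟩ := exists_sdted_eq γ S S'
        have h := sdted_le_cost (γ := γ) (isSdM_swap hM)
        rw [cost_swap hγ] at h
        rw [hc]
        exact h
      exact le_antisymm (key V' V T' T) (key V V' T T')
  · intro V _ V' _ V'' _ T T' T''
    obtain ⟨M, hM, hc⟩ := exists_sdted_eq γ T T'
    obtain ⟨M', hM', hc'⟩ := exists_sdted_eq γ T' T''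
    obtain ⟨M'', hsdm, hle⟩ := cost_comp_le hγ hM hM'
    have h := sdted_le_cost (γ := γ) hsdm
    rw [hc, hc']
    linarith
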